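/- Let V be a unitary matrix on ℂ^d ⊗ ℂ^k, let ρ be a faithful density matrix on ℂ^d and σ a faithful density matrix on ℂ^k. Define ρ' = tr_a(V (ρ ⊗ σ) V*) and 𝓕σ = tr_s(V (ρ ⊗ σ) V*), and assume ρ' and 𝓕σ are faithful. Then S(ρ') − S(ρ) + S(𝓕σ) − S(σ) ≥ 0. -/

import Mathlib

open Matrix Kronecker BigOperators
open scoped ComplexOrder

/-- Matrix logarithm via the spectral functional calculus (junk value `0` off Hermitian matrices). -/
noncomputable def matLog {n : Type*} [Fintype n] [DecidableEq n]
    (A : Matrix n n ℂ) : Matrix n n ℂ :=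
  if h : A.IsHermitian then
    (h.eigenvectorUnitary : Matrix n n ℂ) *
      Matrix.diagonal (fun i => (Real.log (h.eigenvalues i) : ℂ)) *
      (star h.eigenvectorUnitary : Matrix n n ℂ)
  else 0

/-- von Neumann entropy  S(ρ) = −tr(ρ log ρ). -/
noncomputable def vnEntropy {n : Type*} [Fintype n] [DecidableEq n] (A : Matrix n n ℂ) : ℝ :=
  (-(A * matLog A).trace).re

/-- Quantum relative entropy  D(ρ‖σ) = tr(ρ log ρ) − tr(ρ log σ). -/
noncomputable def relEnt {n : Type*} [Fintype n] [DecidableEq n] (ρ σ : Matrix n n ℂ) : ℝ :=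
  ((ρ * matLog ρ).trace - (ρ * matLog σ).trace).re

/-- A density matrix: positive semidefinite with unit trace. -/
def IsDensityMatrix {n : Type*} [Fintype n] (ρ : Matrix n n ℂ) : Prop :=
  ρ.PosSemidef ∧ ρ.trace = 1

/-- A faithful density matrix: positive definite with unit trace. -/
def IsFaithfulDensityMatrix {n : Type*} [Fintype n] (ρ : Matrix n n ℂ) : Prop :=
  ρ.PosDef ∧ ρ.trace = 1

/-- Partial trace over the ancilla (second factor). -/
noncomputable def trA {d k : ℕ} (X : Matrix (Fin d × Fin k) (Fin d × Fin k) ℂ) :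
    Matrix (Fin d) (Fin d) ℂ :=
  Matrix.of fun i i' => ∑ j : Fin k, X (i, j) (i', j)

/-- Partial trace over the system (first factor). -/
noncomputable def trS {d k : ℕ} (X : Matrix (Fin d × Fin k) (Fin d × Fin k) ℂ) :
    Matrix (Fin k) (Fin k) ℂ :=
  Matrix.of fun j j' => ∑ i : Fin d, X (i, j) (i, j')

/-- Unconditional one-step map  𝓥_s(ρ) = tr_a(V (ρ ⊗ σ) V*). -/
noncomputable def Vs {d k : ℕ} (V : Matrix (Fin d × Fin k) (Fin d × Fin k) ℂ)
    (σ : Matrix (Fin k) (Fin k) ℂ) (ρ : Matrix (Fin d) (Fin d) ℂ) :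
    Matrix (Fin d) (Fin d) ℂ :=
  trA (V * (ρ ⊗ₖ σ) * Vᴴ)

/-- Measurement map  𝓜_y(ρ) = tr_a((1 ⊗ M_y) V (ρ ⊗ σ) V* (1 ⊗ M_y)*). -/
noncomputable def Meas {d k : ℕ} (V : Matrix (Fin d × Fin k) (Fin d × Fin k) ℂ)
    (σ : Matrix (Fin k) (Fin k) ℂ) (M : Matrix (Fin k) (Fin k) ℂ)
    (ρ : Matrix (Fin d) (Fin d) ℂ) : Matrix (Fin d) (Fin d) ℂ :=
  trA ((((1 : Matrix (Fin d) (Fin d) ℂ)) ⊗ₖ M) * (V * (ρ ⊗ₖ σ) * Vᴴ) *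
      (((1 : Matrix (Fin d) (Fin d) ℂ)) ⊗ₖ M)ᴴ)

/-- The unnormalized conditioned state  𝓜_{y_m} ∘ ⋯ ∘ 𝓜_{y_1}(ρ₀). -/
noncomputable def measChain {d k : ℕ} {Y : Type} (V : Matrix (Fin d × Fin k) (Fin d × Fin k) ℂ)
    (σ : Matrix (Fin k) (Fin k) ℂ) (M : Y → Matrix (Fin k) (Fin k) ℂ)
    (ρ₀ : Matrix (Fin d) (Fin d) ℂ) : (m : ℕ) → (Fin m → Y) → Matrix (Fin d) (Fin d) ℂ
  | 0, _ => ρ₀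
  | (m + 1), y => Meas V σ (M (y (Fin.last m))) (measChain V σ M ρ₀ m (fun i => y i.castSucc))

/-- The probability  p_m(y)  of the record y. -/
noncomputable def recProb {d k : ℕ} {Y : Type} (V : Matrix (Fin d × Fin k) (Fin d × Fin k) ℂ)
    (σ : Matrix (Fin k) (Fin k) ℂ) (M : Y → Matrix (Fin k) (Fin k) ℂ)
    (ρ₀ : Matrix (Fin d) (Fin d) ℂ) (m : ℕ) (y : Fin m → Y) : ℝ :=
  (measChain V σ M ρ₀ m y).trace.re

/-- The conditional state  ρ̂_{n|m}(y) = 𝓥_s^{n−m}(𝓜_{y_m} ∘ ⋯ ∘ 𝓜_{y_1}(ρ₀)) / p_m(y). -/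
noncomputable def condState {d k : ℕ} {Y : Type} (V : Matrix (Fin d × Fin k) (Fin d × Fin k) ℂ)
    (σ : Matrix (Fin k) (Fin k) ℂ) (M : Y → Matrix (Fin k) (Fin k) ℂ)
    (ρ₀ : Matrix (Fin d) (Fin d) ℂ) (n m : ℕ) (y : Fin m → Y) :
    Matrix (Fin d) (Fin d) ℂ :=
  ((recProb V σ M ρ₀ m y : ℂ))⁻¹ • (Vs V σ)^[n - m] (measChain V σ M ρ₀ m y)

/-- The unconditional state  ρ_n = 𝓥_s^n(ρ₀). -/
noncomputable def uncondState {d k : ℕ} (V : Matrix (Fin d × Fin k) (Fin d × Fin k) ℂ)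
    (σ : Matrix (Fin k) (Fin k) ℂ) (ρ₀ : Matrix (Fin d) (Fin d) ℂ) (n : ℕ) :
    Matrix (Fin d) (Fin d) ℂ :=
  (Vs V σ)^[n] ρ₀

/-- The average conditional entropy  S̄_{n|m}. -/
noncomputable def avgCondEntropy {d k : ℕ} {Y : Type} [Fintype Y]
    (V : Matrix (Fin d × Fin k) (Fin d × Fin k) ℂ)
    (σ : Matrix (Fin k) (Fin k) ℂ) (M : Y → Matrix (Fin k) (Fin k) ℂ)
    (ρ₀ : Matrix (Fin d) (Fin d) ℂ) (n m : ℕ) : ℝ :=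
  ∑ y : Fin m → Y, recProb V σ M ρ₀ m y * vnEntropy (condState V σ M ρ₀ n m y)

/-- The Holevo information  H_{n|m} = S(ρ_n) − S̄_{n|m}. -/
noncomputable def holevoInfo {d k : ℕ} {Y : Type} [Fintype Y]
    (V : Matrix (Fin d × Fin k) (Fin d × Fin k) ℂ)
    (σ : Matrix (Fin k) (Fin k) ℂ) (M : Y → Matrix (Fin k) (Fin k) ℂ)
    (ρ₀ : Matrix (Fin d) (Fin d) ℂ) (n m : ℕ) : ℝ :=
  vnEntropy (uncondState V σ ρ₀ n) - avgCondEntropy V σ M ρ₀ n m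

namespace EntropyAux

variable {n : Type*} [Fintype n] [DecidableEq n]

lemma cancel₁ {Z : Matrix n n ℂ} (h : star Z * Z = 1) (M : Matrix n n ℂ) :
    star Z * (Z * M) = M := by rw [← Matrix.mul_assoc, h, Matrix.one_mul]

lemma cancel₂ {Z : Matrix n n ℂ} (h : Z * star Z = 1) (M : Matrix n n ℂ) :
    Z * (star Z * M) = M := by rw [← Matrix.mul_assoc, h, Matrix.one_mul]

lemma transfer (P : Matrix n n ℂ) (e μ : n → ℝ) (f : ℝ → ℝ)
    (h : P * Matrix.diagonal (fun i => (e i : ℂ)) = Matrix.diagonal (fun i => (μ i : ℂ)) * P) :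
    P * Matrix.diagonal (fun i => (f (e i) : ℂ))
      = Matrix.diagonal (fun i => (f (μ i) : ℂ)) * P := by
  ext i j
  have h' : P i j * (e j : ℂ) = (μ i : ℂ) * P i j := by
    have := congrFun (congrFun (congrArg (fun M => M) h) i) j
    simpa [Matrix.mul_diagonal, Matrix.diagonal_mul] using this
  simp only [Matrix.mul_diagonal, Matrix.diagonal_mul]
  rcases eq_or_ne (P i j) 0 with h0 | h0
  · simp [h0]
  · have he : (e j : ℂ) = (μ i : ℂ) := by
      have : P i j * (e j : ℂ) = P i j * (μ i : ℂ) := by rw [h']; ring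
      exact mul_left_cancel₀ h0 this
    have he' : e j = μ i := by exact_mod_cast he
    rw [he']; ring

lemma matLog_eq (A U : Matrix n n ℂ) (hU : U ∈ Matrix.unitaryGroup n ℂ) (e : n → ℝ)
    (hA : A = U * Matrix.diagonal (fun i => (e i : ℂ)) * star U) :
    matLog A = U * Matrix.diagonal (fun i => (Real.log (e i) : ℂ)) * star U := by
  have hU1 : star U * U = 1 := Matrix.mem_unitaryGroup_iff'.mp hU
  have hU2 : U * star U = 1 := Matrix.mem_unitaryGroup_iff.mp hU
  have hdH : (Matrix.diagonal (fun i => (e i : ℂ))).IsHermitian := by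
    apply Matrix.isHermitian_diagonal_of_self_adjoint
    funext i
    simp [Pi.star_apply, Complex.star_def, Complex.conj_ofReal]
  have hH : A.IsHermitian := by
    rw [hA, Matrix.star_eq_conjTranspose]
    exact Matrix.isHermitian_mul_mul_conjTranspose U hdH
  set W : Matrix n n ℂ := (hH.eigenvectorUnitary : Matrix n n ℂ) with hWdef
  have hWmem : W ∈ Matrix.unitaryGroup n ℂ := hH.eigenvectorUnitary.2
  have hW1 : star W * W = 1 := Matrix.mem_unitaryGroup_iff'.mp hWmem
  have hW2 : W * star W = 1 := Matrix.mem_unitaryGroup_iff.mp hWmem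
  set μ : n → ℝ := hH.eigenvalues with hμdef
  have hspec : A = W * Matrix.diagonal (fun i => (μ i : ℂ)) * star W := by
    have := hH.spectral_theorem
    rw [Unitary.conjStarAlgAut_apply] at this
    exact this
  have h1 : U * Matrix.diagonal (fun i => (e i : ℂ)) * star U
      = W * Matrix.diagonal (fun i => (μ i : ℂ)) * star W := by rw [← hA, hspec]
  have h2 : U * Matrix.diagonal (fun i => (e i : ℂ))
      = W * Matrix.diagonal (fun i => (μ i : ℂ)) * star W * U := by
    have h2' : U * Matrix.diagonal (fun i => (e i : ℂ)) * star U * U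
        = W * Matrix.diagonal (fun i => (μ i : ℂ)) * star W * U := by rw [h1]
    simpa only [Matrix.mul_assoc, hU1, Matrix.mul_one] using h2'
  have hP : (star W * U) * Matrix.diagonal (fun i => (e i : ℂ))
      = Matrix.diagonal (fun i => (μ i : ℂ)) * (star W * U) := by
    rw [Matrix.mul_assoc, h2]
    simp only [← Matrix.mul_assoc, hW1, Matrix.one_mul]
  have hPl := transfer (star W * U) e μ Real.log hP
  have h4 : W * ((star W * U) * Matrix.diagonal (fun i => (Real.log (e i) : ℂ))) * star U
      = W * (Matrix.diagonal (fun i => (Real.log (μ i) : ℂ)) * (star W * U)) * star U := by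
    rw [hPl]
  rw [matLog, dif_pos hH]
  calc (hH.eigenvectorUnitary : Matrix n n ℂ) *
        Matrix.diagonal (fun i => (Real.log (hH.eigenvalues i) : ℂ)) *
        (star hH.eigenvectorUnitary : Matrix n n ℂ)
      = W * Matrix.diagonal (fun i => (Real.log (μ i) : ℂ)) * star W := rfl
    _ = W * (Matrix.diagonal (fun i => (Real.log (μ i) : ℂ)) * (star W * U)) * star U := by
        simp only [Matrix.mul_assoc]
        rw [hU2, Matrix.mul_one]
    _ = W * ((star W * U) * Matrix.diagonal (fun i => (Real.log (e i) : ℂ))) * star U := by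
        rw [h4]
    _ = U * Matrix.diagonal (fun i => (Real.log (e i) : ℂ)) * star U := by
        simp only [← Matrix.mul_assoc, hW2, Matrix.one_mul]



lemma trace_decomp (A U : Matrix n n ℂ) (hU : U ∈ Matrix.unitaryGroup n ℂ) (e : n → ℝ)
    (hA : A = U * Matrix.diagonal (fun i => (e i : ℂ)) * star U) :
    A.trace = ((∑ i, e i : ℝ) : ℂ) := by
  have hU1 : star U * U = 1 := Matrix.mem_unitaryGroup_iff'.mp hU
  rw [hA, Matrix.trace_mul_cycle, hU1, Matrix.one_mul, Matrix.trace_diagonal]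
  push_cast; ring

lemma trace_self_log (A U : Matrix n n ℂ) (hU : U ∈ Matrix.unitaryGroup n ℂ) (e : n → ℝ)
    (hA : A = U * Matrix.diagonal (fun i => (e i : ℂ)) * star U) :
    (A * matLog A).trace = ((∑ i, e i * Real.log (e i) : ℝ) : ℂ) := by
  have hU1 : star U * U = 1 := Matrix.mem_unitaryGroup_iff'.mp hU
  rw [matLog_eq A U hU e hA, hA]
  have h1 : U * Matrix.diagonal (fun i => (e i : ℂ)) * star U *
      (U * Matrix.diagonal (fun i => (Real.log (e i) : ℂ)) * star U)
      = U * (Matrix.diagonal (fun i => (e i : ℂ)) *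
          Matrix.diagonal (fun i => (Real.log (e i) : ℂ))) * star U := by
    simp only [Matrix.mul_assoc]
    rw [cancel₁ hU1]
  rw [h1, Matrix.trace_mul_cycle, hU1, Matrix.one_mul,
    Matrix.diagonal_mul_diagonal, Matrix.trace_diagonal]
  push_cast; ring

lemma trace_log_other (ρ τ U W : Matrix n n ℂ)
    (hU : U ∈ Matrix.unitaryGroup n ℂ) (hW : W ∈ Matrix.unitaryGroup n ℂ)
    (p q : n → ℝ)
    (hρ : ρ = U * Matrix.diagonal (fun i => (p i : ℂ)) * star U)
    (hτ : τ = W * Matrix.diagonal (fun i => (q i : ℂ)) * star W) :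
    (ρ * matLog τ).trace
      = ((∑ i, ∑ j, Complex.normSq ((star W * U) j i) * (p i * Real.log (q j)) : ℝ) : ℂ) := by
  rw [matLog_eq τ W hW q hτ, hρ]
  simp only [Matrix.mul_assoc]
  rw [Matrix.trace_mul_comm]
  simp only [Matrix.mul_assoc]
  have hsw : star U * (W * (Matrix.diagonal (fun i => (Real.log (q i) : ℂ)) * (star W * U)))
      = star (star W * U) * (Matrix.diagonal (fun i => (Real.log (q i) : ℂ)) * (star W * U)) := by
    rw [Matrix.star_mul, star_star, Matrix.mul_assoc]
  rw [hsw]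
  set Q : Matrix n n ℂ := star W * U with hQ
  rw [Matrix.trace]
  push_cast
  refine Finset.sum_congr rfl fun i _ => ?_
  rw [Matrix.diag_apply, Matrix.diagonal_mul, Matrix.mul_apply]
  rw [Finset.mul_sum]
  refine Finset.sum_congr rfl fun j _ => ?_
  rw [Matrix.diagonal_mul, Matrix.star_apply]
  have hns : (Complex.normSq (Q j i) : ℂ) = star (Q j i) * Q j i := by
    rw [Complex.star_def, ← Complex.normSq_eq_conj_mul_self]
  rw [hns]
  ring


lemma klein_sum {n m : Type*} [Fintype n] [Fintype m]
    (p : n → ℝ) (q : m → ℝ) (c : m → n → ℝ)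
    (hp : ∀ i, 0 < p i) (hq : ∀ j, 0 < q j) (hc : ∀ j i, 0 ≤ c j i)
    (hrow : ∀ i, ∑ j, c j i = 1) (hcol : ∀ j, ∑ i, c j i = 1)
    (hps : ∑ i, p i = 1) (hqs : ∑ j, q j = 1) :
    ∑ i, ∑ j, c j i * (p i * Real.log (q j)) ≤ ∑ i, p i * Real.log (p i) := by
  have key : ∀ i j, c j i * (p i - q j)
      ≤ c j i * (p i * Real.log (p i) - p i * Real.log (q j)) := by
    intro i j
    apply mul_le_mul_of_nonneg_left _ (hc j i)
    have hlog : Real.log (q j / p i) ≤ q j / p i - 1 :=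
      Real.log_le_sub_one_of_pos (div_pos (hq j) (hp i))
    rw [Real.log_div (ne_of_gt (hq j)) (ne_of_gt (hp i))] at hlog
    have := mul_le_mul_of_nonneg_left hlog (le_of_lt (hp i))
    rw [mul_sub, mul_sub, mul_div_cancel₀ _ (ne_of_gt (hp i)), mul_one] at this
    linarith
  have hsum : ∑ i, ∑ j, c j i * (p i - q j) = 0 := by
    have h1 : ∑ i, ∑ j, c j i * p i = 1 := by
      calc ∑ i, ∑ j, c j i * p i = ∑ i, (∑ j, c j i) * p i := by
            refine Finset.sum_congr rfl fun i _ => ?_; rw [Finset.sum_mul]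
        _ = ∑ i, p i := by
            refine Finset.sum_congr rfl fun i _ => ?_; rw [hrow i, one_mul]
        _ = 1 := hps
    have h2 : ∑ i, ∑ j, c j i * q j = 1 := by
      rw [Finset.sum_comm]
      calc ∑ j, ∑ i, c j i * q j = ∑ j, (∑ i, c j i) * q j := by
            refine Finset.sum_congr rfl fun j _ => ?_; rw [Finset.sum_mul]
        _ = ∑ j, q j := by
            refine Finset.sum_congr rfl fun j _ => ?_; rw [hcol j, one_mul]
        _ = 1 := hqs
    have : ∑ i, ∑ j, c j i * (p i - q j)
        = (∑ i, ∑ j, c j i * p i) - ∑ i, ∑ j, c j i * q j := by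
      rw [← Finset.sum_sub_distrib]
      refine Finset.sum_congr rfl fun i _ => ?_
      rw [← Finset.sum_sub_distrib]
      refine Finset.sum_congr rfl fun j _ => ?_
      ring
    rw [this, h1, h2]; ring
  have hbig : 0 ≤ ∑ i, ∑ j, c j i * (p i * Real.log (p i) - p i * Real.log (q j)) := by
    rw [← hsum]
    exact Finset.sum_le_sum fun i _ => Finset.sum_le_sum fun j _ => key i j
  have hsplit : ∑ i, ∑ j, c j i * (p i * Real.log (p i) - p i * Real.log (q j))
      = (∑ i, p i * Real.log (p i)) - ∑ i, ∑ j, c j i * (p i * Real.log (q j)) := by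
    rw [← Finset.sum_sub_distrib]
    refine Finset.sum_congr rfl fun i _ => ?_
    have hre : ∑ j, c j i * (p i * Real.log (p i) - p i * Real.log (q j))
        = ∑ j, (c j i * (p i * Real.log (p i)) - c j i * (p i * Real.log (q j))) :=
      Finset.sum_congr rfl fun j _ => by ring
    rw [hre, Finset.sum_sub_distrib, ← Finset.sum_mul, hrow i, one_mul]
  linarith [hsplit ▸ hbig]


lemma unitary_col_sum {n : Type*} [Fintype n] [DecidableEq n]
    (Q : Matrix n n ℂ) (hQ : Q ∈ Matrix.unitaryGroup n ℂ) (i : n) :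
    ∑ j, Complex.normSq (Q j i) = 1 := by
  have h1 : star Q * Q = 1 := Matrix.mem_unitaryGroup_iff'.mp hQ
  have h2 := congrFun (congrFun (congrArg (fun M => M) h1) i) i
  simp only [Matrix.mul_apply, Matrix.star_apply, Matrix.one_apply_eq] at h2
  have h3 : ((∑ j, Complex.normSq (Q j i) : ℝ) : ℂ) = 1 := by
    push_cast
    rw [← h2]
    refine Finset.sum_congr rfl fun j _ => ?_
    rw [Complex.star_def, ← Complex.normSq_eq_conj_mul_self]
  exact_mod_cast h3

lemma unitary_row_sum {n : Type*} [Fintype n] [DecidableEq n]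
    (Q : Matrix n n ℂ) (hQ : Q ∈ Matrix.unitaryGroup n ℂ) (j : n) :
    ∑ i, Complex.normSq (Q j i) = 1 := by
  have h1 : Q * star Q = 1 := Matrix.mem_unitaryGroup_iff.mp hQ
  have h2 := congrFun (congrFun (congrArg (fun M => M) h1) j) j
  simp only [Matrix.mul_apply, Matrix.star_apply, Matrix.one_apply_eq] at h2
  have h3 : ((∑ i, Complex.normSq (Q j i) : ℝ) : ℂ) = 1 := by
    push_cast
    rw [← h2]
    refine Finset.sum_congr rfl fun i _ => ?_
    rw [Complex.star_def, Complex.mul_conj]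
  exact_mod_cast h3

lemma star_kron {d k : Type*} [Fintype d] [Fintype k] [DecidableEq d] [DecidableEq k]
    (A : Matrix d d ℂ) (B : Matrix k k ℂ) :
    star (A ⊗ₖ B) = (star A) ⊗ₖ (star B) := by
  ext ⟨i, j⟩ ⟨i', j'⟩
  simp [Matrix.star_apply, Matrix.kroneckerMap_apply, star_mul', mul_comm]

lemma kron_unitary {d k : Type*} [Fintype d] [Fintype k] [DecidableEq d] [DecidableEq k]
    (A : Matrix d d ℂ) (B : Matrix k k ℂ)
    (hA : A ∈ Matrix.unitaryGroup d ℂ) (hB : B ∈ Matrix.unitaryGroup k ℂ) :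
    (A ⊗ₖ B) ∈ Matrix.unitaryGroup (d × k) ℂ := by
  rw [Matrix.mem_unitaryGroup_iff]
  rw [star_kron, ← Matrix.mul_kronecker_mul, Matrix.mem_unitaryGroup_iff.mp hA,
    Matrix.mem_unitaryGroup_iff.mp hB, Matrix.one_kronecker_one]

lemma kron_spec {d k : Type*} [Fintype d] [Fintype k] [DecidableEq d] [DecidableEq k]
    (A : Matrix d d ℂ) (B : Matrix k k ℂ)
    (UA : Matrix d d ℂ) (UB : Matrix k k ℂ) (a : d → ℝ) (b : k → ℝ)
    (hA : A = UA * Matrix.diagonal (fun i => (a i : ℂ)) * star UA)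
    (hB : B = UB * Matrix.diagonal (fun j => (b j : ℂ)) * star UB) :
    A ⊗ₖ B = (UA ⊗ₖ UB) * Matrix.diagonal (fun ij : d × k => ((a ij.1 * b ij.2 : ℝ) : ℂ))
      * star (UA ⊗ₖ UB) := by
  rw [hA, hB, star_kron, Matrix.mul_kronecker_mul, Matrix.mul_kronecker_mul,
    Matrix.diagonal_kronecker_diagonal]
  congr 2
  funext ij
  push_cast; ring


lemma spec_of_herm {n : Type*} [Fintype n] [DecidableEq n]
    (A : Matrix n n ℂ) (hH : A.IsHermitian) :
    A = (hH.eigenvectorUnitary : Matrix n n ℂ)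
      * Matrix.diagonal (fun i => (hH.eigenvalues i : ℂ))
      * star (hH.eigenvectorUnitary : Matrix n n ℂ) := by
  have := hH.spectral_theorem
  rw [Unitary.conjStarAlgAut_apply] at this
  exact this

lemma matLog_kron {d k : Type*} [Fintype d] [Fintype k] [DecidableEq d] [DecidableEq k]
    (A : Matrix d d ℂ) (B : Matrix k k ℂ) (hA : A.PosDef) (hB : B.PosDef) :
    matLog (A ⊗ₖ B) = (matLog A) ⊗ₖ (1 : Matrix k k ℂ)
      + (1 : Matrix d d ℂ) ⊗ₖ (matLog B) := by
  set UA : Matrix d d ℂ := (hA.1.eigenvectorUnitary : Matrix d d ℂ) with hUA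
  set UB : Matrix k k ℂ := (hB.1.eigenvectorUnitary : Matrix k k ℂ) with hUB
  set a : d → ℝ := hA.1.eigenvalues with ha
  set b : k → ℝ := hB.1.eigenvalues with hb
  have hUAm : UA ∈ Matrix.unitaryGroup d ℂ := hA.1.eigenvectorUnitary.2
  have hUBm : UB ∈ Matrix.unitaryGroup k ℂ := hB.1.eigenvectorUnitary.2
  have hsA : A = UA * Matrix.diagonal (fun i => (a i : ℂ)) * star UA := spec_of_herm A hA.1
  have hsB : B = UB * Matrix.diagonal (fun j => (b j : ℂ)) * star UB := spec_of_herm B hB.1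
  have hkU : UA ⊗ₖ UB ∈ Matrix.unitaryGroup (d × k) ℂ := kron_unitary UA UB hUAm hUBm
  have hspec := kron_spec A B UA UB a b hsA hsB
  have hml := matLog_eq (A ⊗ₖ B) (UA ⊗ₖ UB) hkU (fun ij => a ij.1 * b ij.2) hspec
  rw [hml]
  have hfun : (fun ij : d × k => (Real.log (a ij.1 * b ij.2) : ℂ))
      = fun ij : d × k => (Real.log (a ij.1) : ℂ) * 1 + 1 * (Real.log (b ij.2) : ℂ) := by
    funext ij
    rw [ha, hb,
      Real.log_mul (ne_of_gt (hA.eigenvalues_pos ij.1)) (ne_of_gt (hB.eigenvalues_pos ij.2))]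
    push_cast; ring
  have hd : Matrix.diagonal (fun ij : d × k => (Real.log (a ij.1 * b ij.2) : ℂ))
      = (Matrix.diagonal (fun i => (Real.log (a i) : ℂ))) ⊗ₖ (1 : Matrix k k ℂ)
        + (1 : Matrix d d ℂ) ⊗ₖ (Matrix.diagonal (fun j => (Real.log (b j) : ℂ))) := by
    rw [← Matrix.diagonal_one, ← Matrix.diagonal_one, Matrix.diagonal_kronecker_diagonal,
      Matrix.diagonal_kronecker_diagonal, Matrix.diagonal_add, hfun]
  rw [hd, Matrix.mul_add, Matrix.add_mul, star_kron,
    ← Matrix.mul_kronecker_mul, ← Matrix.mul_kronecker_mul,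
    ← Matrix.mul_kronecker_mul, ← Matrix.mul_kronecker_mul]
  rw [matLog_eq A UA hUAm a hsA, matLog_eq B UB hUBm b hsB]
  rw [Matrix.mul_one, Matrix.mul_one, Matrix.mem_unitaryGroup_iff.mp hUBm,
    Matrix.mem_unitaryGroup_iff.mp hUAm]



lemma trace_mul_kron_one {d k : ℕ} (X : Matrix (Fin d × Fin k) (Fin d × Fin k) ℂ)
    (M : Matrix (Fin d) (Fin d) ℂ) :
    (X * (M ⊗ₖ (1 : Matrix (Fin k) (Fin k) ℂ))).trace = (trA X * M).trace := by
  rw [Matrix.trace, Matrix.trace]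
  simp only [Matrix.diag_apply, Matrix.mul_apply, Matrix.kroneckerMap_apply, trA,
    Matrix.one_apply, Matrix.of_apply, Fintype.sum_prod_type, Finset.sum_mul,
    mul_ite, mul_one, mul_zero]
  simp only [Finset.sum_ite_eq', Finset.mem_univ, if_true]
  exact Finset.sum_congr rfl fun x _ => Finset.sum_comm

lemma trace_mul_one_kron {d k : ℕ} (X : Matrix (Fin d × Fin k) (Fin d × Fin k) ℂ)
    (N : Matrix (Fin k) (Fin k) ℂ) :
    (X * ((1 : Matrix (Fin d) (Fin d) ℂ) ⊗ₖ N)).trace = (trS X * N).trace := by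
  rw [Matrix.trace, Matrix.trace]
  simp only [Matrix.diag_apply, Matrix.mul_apply, Matrix.kroneckerMap_apply, trS,
    Matrix.one_apply, Matrix.of_apply, Fintype.sum_prod_type, Finset.sum_mul,
    ite_mul, one_mul, zero_mul, mul_ite, mul_one, mul_zero, Finset.sum_ite_eq,
    Finset.sum_ite_eq', Finset.mem_univ, if_true]
  have h1 : ∀ (x : Fin d) (x1 : Fin k),
      (∑ x2 : Fin d, ∑ x3 : Fin k, if x2 = x then X (x, x1) (x2, x3) * N x3 x1 else 0)
        = ∑ x3 : Fin k, X (x, x1) (x, x3) * N x3 x1 := by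
    intro x x1
    rw [Finset.sum_comm]
    simp [Finset.sum_ite_eq']
  rw [Finset.sum_congr rfl fun x _ => Finset.sum_congr rfl fun x1 _ => h1 x x1,
    Finset.sum_comm]
  exact Finset.sum_congr rfl fun j _ => Finset.sum_comm

end EntropyAux

open EntropyAux

/-- the entropy-change inequality from nonnegativity of the mutual
information after a system–ancilla interaction. -/
theorem entropy_increment_inequality_first {d k : ℕ}
    (V : Matrix (Fin d × Fin k) (Fin d × Fin k) ℂ)
    (hV : V ∈ Matrix.unitaryGroup (Fin d × Fin k) ℂ)
    (ρ : Matrix (Fin d) (Fin d) ℂ) (hρ : IsFaithfulDensityMatrix ρ)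
    (σ : Matrix (Fin k) (Fin k) ℂ) (hσ : IsFaithfulDensityMatrix σ)
    (hρ' : (trA (V * (ρ ⊗ₖ σ) * Vᴴ)).PosDef)
    (hF : (trS (V * (ρ ⊗ₖ σ) * Vᴴ)).PosDef) :
    0 ≤ vnEntropy (trA (V * (ρ ⊗ₖ σ) * Vᴴ)) - vnEntropy ρ +
          vnEntropy (trS (V * (ρ ⊗ₖ σ) * Vᴴ)) - vnEntropy σ := by
  have hVs : Vᴴ = star V := (Matrix.star_eq_conjTranspose V).symm
  set X : Matrix (Fin d × Fin k) (Fin d × Fin k) ℂ := V * (ρ ⊗ₖ σ) * Vᴴ with hX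
  -- decompositions of ρ and σ
  set Uρ : Matrix (Fin d) (Fin d) ℂ := (hρ.1.1.eigenvectorUnitary : Matrix (Fin d) (Fin d) ℂ)
  set Uσ : Matrix (Fin k) (Fin k) ℂ := (hσ.1.1.eigenvectorUnitary : Matrix (Fin k) (Fin k) ℂ)
  set p : Fin d → ℝ := hρ.1.1.eigenvalues with hp
  set q : Fin k → ℝ := hσ.1.1.eigenvalues with hq
  have hUρm : Uρ ∈ Matrix.unitaryGroup (Fin d) ℂ := hρ.1.1.eigenvectorUnitary.2
  have hUσm : Uσ ∈ Matrix.unitaryGroup (Fin k) ℂ := hσ.1.1.eigenvectorUnitary.2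
  have hsρ : ρ = Uρ * Matrix.diagonal (fun i => (p i : ℂ)) * star Uρ := spec_of_herm ρ hρ.1.1
  have hsσ : σ = Uσ * Matrix.diagonal (fun j => (q j : ℂ)) * star Uσ := spec_of_herm σ hσ.1.1
  have hppos : ∀ i, 0 < p i := fun i => hρ.1.eigenvalues_pos i
  have hqpos : ∀ j, 0 < q j := fun j => hσ.1.eigenvalues_pos j
  -- decomposition of X
  set UX : Matrix (Fin d × Fin k) (Fin d × Fin k) ℂ := V * (Uρ ⊗ₖ Uσ) with hUX
  set eX : Fin d × Fin k → ℝ := fun ij => p ij.1 * q ij.2 with heX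
  have hUXm : UX ∈ Matrix.unitaryGroup (Fin d × Fin k) ℂ :=
    mul_mem hV (kron_unitary Uρ Uσ hUρm hUσm)
  have hsX : X = UX * Matrix.diagonal (fun ij => (eX ij : ℂ)) * star UX := by
    rw [hX, hVs, hUX, kron_spec ρ σ Uρ Uσ p q hsρ hsσ, Matrix.star_mul]
    simp only [Matrix.mul_assoc, heX]
  -- sums of eigenvalues are 1
  have hsp : ∑ i, p i = 1 := by
    have := trace_decomp ρ Uρ hUρm p hsρ
    rw [hρ.2] at this
    exact_mod_cast this.symm
  have hsq : ∑ j, q j = 1 := by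
    have := trace_decomp σ Uσ hUσm q hsσ
    rw [hσ.2] at this
    exact_mod_cast this.symm
  have hseX : ∑ ij, eX ij = 1 := by
    rw [heX]
    rw [Fintype.sum_prod_type]
    calc ∑ i, ∑ j, p i * q j = ∑ i, p i * ∑ j, q j := by
          exact Finset.sum_congr rfl fun i _ => by rw [Finset.mul_sum]
      _ = 1 := by rw [hsq]; simpa using hsp
  -- traces of the marginals are 1
  have htX : X.trace = 1 := by
    rw [trace_decomp X UX hUXm eX hsX]
    exact_mod_cast hseX
  have htA : (trA X).trace = 1 := by
    have h := trace_mul_kron_one X (1 : Matrix (Fin d) (Fin d) ℂ)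
    rw [Matrix.one_kronecker_one, Matrix.mul_one, Matrix.mul_one] at h
    rw [← h, htX]
  have htS : (trS X).trace = 1 := by
    have h := trace_mul_one_kron X (1 : Matrix (Fin k) (Fin k) ℂ)
    rw [Matrix.one_kronecker_one, Matrix.mul_one, Matrix.mul_one] at h
    rw [← h, htX]
  -- decompositions of the marginals
  set Ua : Matrix (Fin d) (Fin d) ℂ := (hρ'.1.eigenvectorUnitary : Matrix (Fin d) (Fin d) ℂ)
  set Ub : Matrix (Fin k) (Fin k) ℂ := (hF.1.eigenvectorUnitary : Matrix (Fin k) (Fin k) ℂ)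
  set a : Fin d → ℝ := hρ'.1.eigenvalues with haa
  set b : Fin k → ℝ := hF.1.eigenvalues with hbb
  have hUam : Ua ∈ Matrix.unitaryGroup (Fin d) ℂ := hρ'.1.eigenvectorUnitary.2
  have hUbm : Ub ∈ Matrix.unitaryGroup (Fin k) ℂ := hF.1.eigenvectorUnitary.2
  have hsa : trA X = Ua * Matrix.diagonal (fun i => (a i : ℂ)) * star Ua :=
    spec_of_herm _ hρ'.1
  have hsb : trS X = Ub * Matrix.diagonal (fun j => (b j : ℂ)) * star Ub :=
    spec_of_herm _ hF.1
  have hapos : ∀ i, 0 < a i := fun i => hρ'.eigenvalues_pos i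
  have hbpos : ∀ j, 0 < b j := fun j => hF.eigenvalues_pos j
  have hsa1 : ∑ i, a i = 1 := by
    have := trace_decomp (trA X) Ua hUam a hsa
    rw [htA] at this
    exact_mod_cast this.symm
  have hsb1 : ∑ j, b j = 1 := by
    have := trace_decomp (trS X) Ub hUbm b hsb
    rw [htS] at this
    exact_mod_cast this.symm
  -- decomposition of τ = trA X ⊗ trS X
  set Uτ : Matrix (Fin d × Fin k) (Fin d × Fin k) ℂ := Ua ⊗ₖ Ub with hUτ
  set eτ : Fin d × Fin k → ℝ := fun ij => a ij.1 * b ij.2 with heτ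
  have hUτm : Uτ ∈ Matrix.unitaryGroup (Fin d × Fin k) ℂ := kron_unitary Ua Ub hUam hUbm
  have hsτ : (trA X) ⊗ₖ (trS X)
      = Uτ * Matrix.diagonal (fun ij => (eτ ij : ℂ)) * star Uτ :=
    kron_spec _ _ Ua Ub a b hsa hsb
  have hseτ : ∑ ij, eτ ij = 1 := by
    rw [heτ, Fintype.sum_prod_type]
    calc ∑ i, ∑ j, a i * b j = ∑ i, a i * ∑ j, b j := by
          exact Finset.sum_congr rfl fun i _ => by rw [Finset.mul_sum]
      _ = 1 := by rw [hsb1]; simpa using hsa1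
  -- entropies
  set Sp : ℝ := ∑ i, p i * Real.log (p i) with hSp
  set Sq : ℝ := ∑ j, q j * Real.log (q j) with hSq
  set Sa : ℝ := ∑ i, a i * Real.log (a i) with hSa
  set Sb : ℝ := ∑ j, b j * Real.log (b j) with hSb
  have hvρ : vnEntropy ρ = -Sp := by
    rw [vnEntropy, trace_self_log ρ Uρ hUρm p hsρ]
    simp
    exact hSp.symm
  have hvσ : vnEntropy σ = -Sq := by
    rw [vnEntropy, trace_self_log σ Uσ hUσm q hsσ]
    simp
    exact hSq.symm
  have hvA : vnEntropy (trA X) = -Sa := by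
    rw [vnEntropy, trace_self_log (trA X) Ua hUam a hsa]
    simp
    exact hSa.symm
  have hvS : vnEntropy (trS X) = -Sb := by
    rw [vnEntropy, trace_self_log (trS X) Ub hUbm b hsb]
    simp
    exact hSb.symm
  -- key identity 1 : tr(X log X) = Sp + Sq
  have key1 : ∑ ij : Fin d × Fin k, eX ij * Real.log (eX ij) = Sp + Sq := by
    rw [heX, Fintype.sum_prod_type]
    have hinner : ∀ i, ∑ j, p i * q j * Real.log (p i * q j)
        = p i * Real.log (p i) * (∑ j, q j) + p i * ∑ j, q j * Real.log (q j) := by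
      intro i
      rw [Finset.mul_sum, Finset.mul_sum, ← Finset.sum_add_distrib]
      refine Finset.sum_congr rfl fun j _ => ?_
      rw [Real.log_mul (ne_of_gt (hppos i)) (ne_of_gt (hqpos j))]
      ring
    rw [Finset.sum_congr rfl fun i _ => hinner i]
    rw [Finset.sum_add_distrib, hsq]
    simp only [mul_one]
    rw [← Finset.sum_mul, hsp]
    rw [hSp, hSq]; ring
  -- key identity 2 : tr(X log τ) = Sa + Sb
  have key2 : (X * matLog ((trA X) ⊗ₖ (trS X))).trace = ((Sa + Sb : ℝ) : ℂ) := by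
    rw [matLog_kron (trA X) (trS X) hρ' hF, Matrix.mul_add, Matrix.trace_add,
      trace_mul_kron_one, trace_mul_one_kron,
      trace_self_log (trA X) Ua hUam a hsa, trace_self_log (trS X) Ub hUbm b hsb]
    rw [hSa, hSb]; push_cast; ring
  -- key identity 3 : tr(X log τ) as doubly-stochastic average
  have key3 := trace_log_other X ((trA X) ⊗ₖ (trS X)) UX Uτ hUXm hUτm eX eτ hsX hsτ
  -- Klein inequality
  set Q : Matrix (Fin d × Fin k) (Fin d × Fin k) ℂ := star Uτ * UX with hQ
  have hQm : Q ∈ Matrix.unitaryGroup (Fin d × Fin k) ℂ := mul_mem (Unitary.star_mem hUτm) hUXm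
  have hklein : ∑ I, ∑ J, Complex.normSq (Q J I) * (eX I * Real.log (eτ J))
      ≤ ∑ I, eX I * Real.log (eX I) := by
    refine klein_sum eX eτ (fun J I => Complex.normSq (Q J I))
      (fun I => mul_pos (hppos _) (hqpos _)) (fun J => mul_pos (hapos _) (hbpos _))
      (fun J I => Complex.normSq_nonneg _) (fun I => unitary_col_sum Q hQm I)
      (fun J => unitary_row_sum Q hQm J) hseX hseτ
  have hSab : Sa + Sb = ∑ I, ∑ J, Complex.normSq (Q J I) * (eX I * Real.log (eτ J)) := by
    have := key2.symm.trans key3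
    exact_mod_cast this
  rw [hvρ, hvσ, hvA, hvS]
  have hfin : Sa + Sb ≤ Sp + Sq := by
    rw [hSab, ← key1]
    exact hklein
  linarith
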